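/- Let α > 0 and let (X₀, X₁) be ℝ^d-valued random vectors with law(X₀) = law(X₁), with Pr(‖X₀‖ > x) > 0 for all x > 0 and Pr(‖X₀‖ > ux)/Pr(‖X₀‖ > x) → u^{−α} as x → ∞ for every u > 0. Suppose there exist random elements Y ∈ ℝ, M₀ ∈ S^{d−1}, M₁ ∈ ℝ^d on some probability space with Y independent of (M₀, M₁), Pr(Y > y) = y^{−α} for y ≥ 1, such that for every bounded continuous f : ℝ × ℝ^d × ℝ^d → ℝ, E[f(‖X₀‖/x, X₀/‖X₀‖, X₁/‖X₀‖) | ‖X₀‖ > x] → E[f(Y, M₀, M₁)] as x → ∞. Then for every Borel set S ⊆ S^{d−1}, E[1_{{M₁ ≠ 0}} 1_S(M₁/‖M₁‖) ‖M₁‖^α] ≤ Pr(M₀ ∈ S); that is, the joint law of (M₀, M₁) belongs to M_α. -/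

import Mathlib

open MeasureTheory Filter Set
open scoped ENNReal Topology Classical

noncomputable section

/-- `ℝ^d` with the Euclidean norm. -/
abbrev Ed (d : ℕ) : Type := EuclideanSpace ℝ (Fin d)

/-- The unit sphere `S^{d-1}` of `ℝ^d`. -/
def unitSphere (d : ℕ) : Set (Ed d) := Metric.sphere 0 1

/-- `∫ 1_{m ≠ 0} 1_S(m/‖m‖) ‖m‖^α P(ds, dm)`: the mass that `P` sends to the set of
directions `S ⊆ S^{d-1}`, weighted by `‖m‖^α`. -/
def dirMass (d : ℕ) (α : ℝ) (P : Measure (Ed d × Ed d)) (S : Set (Ed d)) : ℝ≥0∞ :=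
  ∫⁻ p, Set.indicator {p : Ed d × Ed d | p.2 ≠ 0 ∧ ‖p.2‖⁻¹ • p.2 ∈ S}
    (fun p => ENNReal.ofReal (‖p.2‖ ^ α)) p ∂P

/-- Membership in the class `M_α` of admissible distributions: probability measures
on `S^{d-1} × ℝ^d` (encoded as measures on `ℝ^d × ℝ^d` whose first marginal is
concentrated on the unit sphere) such that
`∫ 1_{m ≠ 0} 1_S(m/‖m‖) ‖m‖^α P(ds, dm) ≤ P(S × ℝ^d)` for every Borel `S ⊆ S^{d-1}`. -/
structure MemMalpha (d : ℕ) (α : ℝ) (P : Measure (Ed d × Ed d)) : Prop where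
  prob : IsProbabilityMeasure P
  sphere : P {p : Ed d × Ed d | ‖p.1‖ = 1} = 1
  adm : ∀ S : Set (Ed d), MeasurableSet S → S ⊆ unitSphere d →
    dirMass d α P S ≤ P (S ×ˢ (univ : Set (Ed d)))

/-- `Q` is the adjoint measure `P*` of `P ∈ M_α`: a Borel measure on
`S^{d-1} × ℝ^d` satisfying
`P*(S × {0}) = P(S × ℝ^d) − ∫ 1_{m ≠ 0} 1_S(m/‖m‖) ‖m‖^α P(ds, dm)` for Borel
`S ⊆ S^{d-1}`, and
`P*(E) = ∫ 1_{m ≠ 0} 1_E(m/‖m‖, s/‖m‖) ‖m‖^α P(ds, dm)` for Borel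
`E ⊆ S^{d-1} × (ℝ^d \ {0})`. -/
structure IsAdjoint (d : ℕ) (α : ℝ) (P Q : Measure (Ed d × Ed d)) : Prop where
  supp : Q {p : Ed d × Ed d | ‖p.1‖ ≠ 1} = 0
  eq_zero : ∀ S : Set (Ed d), MeasurableSet S → S ⊆ unitSphere d →
    Q (S ×ˢ ({0} : Set (Ed d))) = P (S ×ˢ (univ : Set (Ed d))) - dirMass d α P S
  eq_pos : ∀ E : Set (Ed d × Ed d), MeasurableSet E →
    E ⊆ (unitSphere d) ×ˢ ({0}ᶜ : Set (Ed d)) →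
    Q E = ∫⁻ p, Set.indicator
        {p : Ed d × Ed d | p.2 ≠ 0 ∧ (‖p.2‖⁻¹ • p.2, ‖p.2‖⁻¹ • p.1) ∈ E}
        (fun p => ENNReal.ofReal (‖p.2‖ ^ α)) p ∂P


/-- A continuous ramp function: `0` below `u`, `1` above `u'`. -/
def hfun (u u' t : ℝ) : ℝ := min 1 (max 0 ((t - u) / (u' - u)))

/-- ramp function -/
lemma hfun_nonneg (u u' t : ℝ) : 0 ≤ hfun u u' t := by
  unfold hfun
  rcases le_total (1:ℝ) (max 0 ((t - u) / (u' - u))) with h | h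
  · simp [min_eq_left h]
  · simp [min_eq_right h, le_max_left]

lemma hfun_le_one (u u' t : ℝ) : hfun u u' t ≤ 1 := min_le_left _ _

lemma hfun_eq_zero {u u' t : ℝ} (h : u < u') (ht : t ≤ u) : hfun u u' t = 0 := by
  unfold hfun
  have h1 : (t - u) / (u' - u) ≤ 0 :=
    div_nonpos_of_nonpos_of_nonneg (by linarith) (by linarith)
  rw [max_eq_left h1, min_eq_right zero_le_one]

lemma hfun_eq_one {u u' t : ℝ} (h : u < u') (ht : u' ≤ t) : hfun u u' t = 1 := by
  unfold hfun
  have h0 : (0:ℝ) < u' - u := by linarith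
  have h1 : (1:ℝ) ≤ (t - u) / (u' - u) := (le_div_iff₀ h0).2 (by linarith)
  rw [max_eq_right (le_trans zero_le_one h1), min_eq_left h1]

lemma hfun_continuous (u u' : ℝ) : Continuous (hfun u u') := by
  unfold hfun
  fun_prop

lemma measurable_dir (d : ℕ) : Measurable (fun m : Ed d => ‖m‖⁻¹ • m) :=
  (measurable_norm.inv).smul measurable_id

/-- continuity of the key test function -/
lemma cont_test (d : ℕ) (g : Ed d → ℝ) (hg : Continuous g) {u u' : ℝ} (hu : 0 < u)
    (huu' : u < u') :
    Continuous (fun p : ℝ × Ed d × Ed d =>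
      g (‖p.2.2‖⁻¹ • p.2.2) * hfun u u' (p.1 * ‖p.2.2‖)) := by
  rw [continuous_iff_continuousAt]
  intro p
  by_cases hp : p.2.2 = 0
  · -- locally zero
    have hmem : {q : ℝ × Ed d × Ed d | |q.1| < |p.1| + 1 ∧ ‖q.2.2‖ < u / (|p.1| + 1)}
        ∈ 𝓝 p := by
      have hc : Continuous (fun q : ℝ × Ed d × Ed d => (|q.1|, ‖q.2.2‖)) := by fun_prop
      have : IsOpen {q : ℝ × Ed d × Ed d | |q.1| < |p.1| + 1 ∧ ‖q.2.2‖ < u / (|p.1| + 1)} := by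
        have : {q : ℝ × Ed d × Ed d | |q.1| < |p.1| + 1 ∧ ‖q.2.2‖ < u / (|p.1| + 1)} =
            (fun q : ℝ × Ed d × Ed d => (|q.1|, ‖q.2.2‖)) ⁻¹'
              (Iio (|p.1| + 1) ×ˢ Iio (u / (|p.1| + 1))) := by
          ext q; simp [Set.mem_prod]
        rw [this]
        exact (isOpen_Iio.prod isOpen_Iio).preimage hc
      refine this.mem_nhds ?_
      constructor
      · linarith [abs_nonneg p.1]
      · simp [hp]
        positivity
    have hzero : ∀ q ∈ {q : ℝ × Ed d × Ed d | |q.1| < |p.1| + 1 ∧ ‖q.2.2‖ < u / (|p.1| + 1)},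
        g (‖q.2.2‖⁻¹ • q.2.2) * hfun u u' (q.1 * ‖q.2.2‖) = 0 := by
      intro q ⟨h1, h2⟩
      have hb : q.1 * ‖q.2.2‖ ≤ u := by
        have h3 : q.1 * ‖q.2.2‖ ≤ |q.1| * ‖q.2.2‖ :=
          mul_le_mul_of_nonneg_right (le_abs_self _) (norm_nonneg _)
        have h4 : |q.1| * ‖q.2.2‖ ≤ (|p.1| + 1) * (u / (|p.1| + 1)) := by
          apply mul_le_mul h1.le h2.le (norm_nonneg _) (by linarith [abs_nonneg p.1])
        have h5 : (|p.1| + 1) * (u / (|p.1| + 1)) = u := by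
          field_simp
        linarith
      rw [hfun_eq_zero huu' hb, mul_zero]
    have heq : (fun q : ℝ × Ed d × Ed d =>
        g (‖q.2.2‖⁻¹ • q.2.2) * hfun u u' (q.1 * ‖q.2.2‖)) =ᶠ[𝓝 p] fun _ => 0 :=
      eventually_of_mem hmem hzero
    have : ContinuousAt (fun _ : ℝ × Ed d × Ed d => (0:ℝ)) p := continuousAt_const
    exact this.congr heq.symm
  · -- p.2.2 ≠ 0
    have h1 : ContinuousAt (fun q : ℝ × Ed d × Ed d => g (‖q.2.2‖⁻¹ • q.2.2)) p := by
      apply hg.continuousAt.comp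
      apply ContinuousAt.smul (f := fun q : ℝ × Ed d × Ed d => ‖q.2.2‖⁻¹) (g := fun q : ℝ × Ed d × Ed d => q.2.2)
      · exact (continuous_norm.comp (continuous_snd.comp continuous_snd)).continuousAt.inv₀
          (by simp [hp])
      · exact (continuous_snd.comp continuous_snd).continuousAt
    have h2 : ContinuousAt (fun q : ℝ × Ed d × Ed d => hfun u u' (q.1 * ‖q.2.2‖)) p :=
      ((hfun_continuous u u').comp
        (continuous_fst.mul (continuous_norm.comp (continuous_snd.comp continuous_snd)))).continuousAt
    exact h1.mul h2


/-- tail of the Pareto law, for every positive threshold -/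
lemma pareto_tail {Ω' : Type*} [MeasurableSpace Ω'] (ν : Measure Ω') [IsProbabilityMeasure ν]
    (Y : Ω' → ℝ) {α : ℝ} (hα : 0 < α)
    (hYlaw : ∀ y : ℝ, 1 ≤ y → ν {ω | y < Y ω} = ENNReal.ofReal (y ^ (-α)))
    {c : ℝ} (hc0 : 0 < c) : ν {ω | c < Y ω} = ENNReal.ofReal (min 1 (c ^ (-α))) := by
  rcases le_or_gt 1 c with hc | hc
  · rw [hYlaw c hc]
    congr 1
    have : c ^ (-α) ≤ 1 := by
      rw [Real.rpow_neg (by linarith)]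
      exact inv_le_one_of_one_le₀ (Real.one_le_rpow hc hα.le)
    rw [min_eq_right this]
  · have h1 : ν {ω | (1:ℝ) < Y ω} = 1 := by
      rw [hYlaw 1 le_rfl]; simp
    have hsub : {ω | (1:ℝ) < Y ω} ⊆ {ω | c < Y ω} := fun ω h => lt_trans hc h
    have h2 : ν {ω | c < Y ω} = 1 := le_antisymm prob_le_one (h1 ▸ measure_mono hsub)
    rw [h2]
    have hge : (1:ℝ) ≤ c ^ (-α) := by
      rw [Real.rpow_neg hc0.le, le_inv_comm₀ one_pos (by positivity)]
      simpa using Real.rpow_le_one hc0.le hc.le hα.le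
    rw [min_eq_left hge]; simp

/-- measurability of rpow with nonnegative base -/
lemma measurable_rpow_comp {β : Type*} [MeasurableSpace β] {f : β → ℝ} (hf : Measurable f)
    (hf0 : ∀ x, 0 ≤ f x) {c : ℝ} (hc : c ≠ 0) : Measurable fun x => f x ^ c := by
  have heq : (fun x => f x ^ c)
      = fun x => if f x = 0 then 0 else Real.exp (Real.log (f x) * c) := by
    ext x
    by_cases h : f x = 0
    · simp [h, Real.zero_rpow hc]
    · rw [if_neg h, Real.rpow_def_of_pos (lt_of_le_of_ne (hf0 x) (Ne.symm h))]
  rw [heq]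
  have hs : MeasurableSet {x | f x = 0} := hf (measurableSet_singleton 0)
  exact Measurable.ite hs measurable_const
    (Real.measurable_exp.comp ((Real.measurable_log.comp hf).mul_const c))

/-- key independence computation -/
lemma indep_calc {d : ℕ} {Ω' : Type*} [MeasurableSpace Ω'] (ν : Measure Ω') [IsProbabilityMeasure ν]
    (Y : Ω' → ℝ) (M₁ : Ω' → Ed d) (hY : Measurable Y) (hM₁ : Measurable M₁)
    (hind : ProbabilityTheory.IndepFun Y M₁ ν)
    {α : ℝ} (hα : 0 < α)
    (hYlaw : ∀ y : ℝ, 1 ≤ y → ν {ω | y < Y ω} = ENNReal.ofReal (y ^ (-α)))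
    (G : Ed d → ℝ) (hGm : Measurable G)
    {u' : ℝ} (hu' : 1 ≤ u') :
    ∫⁻ ω, ENNReal.ofReal (G (M₁ ω)) *
        Set.indicator {p : ℝ × Ed d | u' < p.1 * ‖p.2‖} 1 (Y ω, M₁ ω) ∂ν
      = ∫⁻ ω, ENNReal.ofReal (G (M₁ ω)) *
          (if M₁ ω = 0 then 0 else ENNReal.ofReal (min 1 ((u' / ‖M₁ ω‖) ^ (-α)))) ∂ν := by
  classical
  have hu'0 : (0:ℝ) < u' := lt_of_lt_of_le one_pos hu'
  set Ψ : Ed d → ℝ≥0∞ := fun m =>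
    ENNReal.ofReal (G m) * (if m = 0 then 0 else ENNReal.ofReal (min 1 ((u' / ‖m‖) ^ (-α))))
    with hΨdef
  have hΨm : Measurable Ψ := by
    apply Measurable.mul
    · exact ENNReal.measurable_ofReal.comp hGm
    · apply Measurable.ite (MeasurableSet.singleton 0) measurable_const
      exact ENNReal.measurable_ofReal.comp
        (measurable_const.min (measurable_rpow_comp (measurable_const.div measurable_norm)
          (fun m => div_nonneg hu'0.le (norm_nonneg _)) (neg_ne_zero.2 hα.ne')))
  set F : ℝ × Ed d → ℝ≥0∞ := fun p =>
    ENNReal.ofReal (G p.2) * Set.indicator {p : ℝ × Ed d | u' < p.1 * ‖p.2‖} 1 p with hFdef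
  have hset : MeasurableSet {p : ℝ × Ed d | u' < p.1 * ‖p.2‖} := by
    have : Continuous fun p : ℝ × Ed d => p.1 * ‖p.2‖ := by fun_prop
    exact measurableSet_lt measurable_const this.measurable
  have hFm : Measurable F := by
    apply Measurable.mul
    · exact ENNReal.measurable_ofReal.comp (hGm.comp measurable_snd)
    · exact (measurable_const.indicator hset)
  haveI : IsProbabilityMeasure (ν.map Y) := Measure.isProbabilityMeasure_map hY.aemeasurable
  haveI : IsProbabilityMeasure (ν.map M₁) := Measure.isProbabilityMeasure_map hM₁.aemeasurable
  have hjoint : ν.map (fun ω => (Y ω, M₁ ω)) = (ν.map Y).prod (ν.map M₁) :=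
    (ProbabilityTheory.indepFun_iff_map_prod_eq_prod_map_map hY.aemeasurable
      hM₁.aemeasurable).1 hind
  have step1 : ∫⁻ ω, F (Y ω, M₁ ω) ∂ν = ∫⁻ p, F p ∂((ν.map Y).prod (ν.map M₁)) := by
    rw [← hjoint, lintegral_map hFm (hY.prodMk hM₁)]
  have step2 : ∫⁻ p, F p ∂((ν.map Y).prod (ν.map M₁)) = ∫⁻ m, Ψ m ∂(ν.map M₁) := by
    rw [lintegral_prod_symm' F hFm]
    apply lintegral_congr
    intro m
    have hin : ∀ y : ℝ, F (y, m) = ENNReal.ofReal (G m) *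
        Set.indicator {y : ℝ | u' < y * ‖m‖} 1 y := by
      intro y
      simp only [hFdef, Set.indicator_apply, Set.mem_setOf_eq, Pi.one_apply]
    simp only [hin]
    clear hin
    have hms : MeasurableSet {y : ℝ | u' < y * ‖m‖} := by
      have : Continuous fun y : ℝ => y * ‖m‖ := by fun_prop
      exact measurableSet_lt measurable_const this.measurable
    rw [lintegral_const_mul _ (measurable_one.indicator hms)]
    rw [hΨdef]
    congr 1
    rw [lintegral_indicator_one hms]
    by_cases hm : m = 0
    · simp only [hm, if_true]
      have : {y : ℝ | u' < y * ‖(0 : Ed d)‖} = ∅ := by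
        ext y; simp [not_lt.2 hu'0.le]
      rw [this]; simp
    · simp only [hm, if_false]
      have hnm : (0:ℝ) < ‖m‖ := norm_pos_iff.2 hm
      have hsetEq : {y : ℝ | u' < y * ‖m‖} = {y : ℝ | u' / ‖m‖ < y} := by
        ext y
        simp only [Set.mem_setOf_eq]
        rw [div_lt_iff₀ hnm]
      have hms2 : MeasurableSet {y : ℝ | u' / ‖m‖ < y} := measurableSet_Ioi
      rw [hsetEq, Measure.map_apply hY hms2]
      have : Y ⁻¹' {y : ℝ | u' / ‖m‖ < y} = {ω | u' / ‖m‖ < Y ω} := rfl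
      rw [this, pareto_tail ν Y hα hYlaw (show (0:ℝ) < u' / ‖m‖ by positivity)]
  have step3 : ∫⁻ m, Ψ m ∂(ν.map M₁) = ∫⁻ ω, Ψ (M₁ ω) ∂ν := lintegral_map hΨm hM₁
  calc ∫⁻ ω, ENNReal.ofReal (G (M₁ ω)) *
        Set.indicator {p : ℝ × Ed d | u' < p.1 * ‖p.2‖} 1 (Y ω, M₁ ω) ∂ν
      = ∫⁻ ω, F (Y ω, M₁ ω) ∂ν := rfl
    _ = ∫⁻ m, Ψ m ∂(ν.map M₁) := by rw [step1, step2]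
    _ = ∫⁻ ω, Ψ (M₁ ω) ∂ν := step3


lemma limit_bound
    {d : ℕ} {α : ℝ} (hα : 0 < α)
    {Ω : Type*} [MeasurableSpace Ω] (μ : Measure Ω) [IsProbabilityMeasure μ]
    (X₀ X₁ : Ω → Ed d) (hX₀ : Measurable X₀) (hX₁ : Measurable X₁)
    (hstat : μ.map X₀ = μ.map X₁)
    (hpos : ∀ x : ℝ, 0 < x → 0 < μ {ω | x < ‖X₀ ω‖})
    (hreg : ∀ u : ℝ, 0 < u →
      Tendsto (fun x : ℝ =>
          (μ {ω | u * x < ‖X₀ ω‖}).toReal / (μ {ω | x < ‖X₀ ω‖}).toReal)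
        atTop (𝓝 (u ^ (-α))))
    {Ω' : Type*} [MeasurableSpace Ω'] (ν : Measure Ω') [IsProbabilityMeasure ν]
    (Y : Ω' → ℝ) (M₀ M₁ : Ω' → Ed d)
    (hconv : ∀ f : ℝ × Ed d × Ed d → ℝ, Continuous f → (∃ C : ℝ, ∀ y, |f y| ≤ C) →
      Tendsto (fun x : ℝ =>
          (∫ ω in {ω | x < ‖X₀ ω‖},
              f (‖X₀ ω‖ / x, ‖X₀ ω‖⁻¹ • X₀ ω, ‖X₀ ω‖⁻¹ • X₁ ω) ∂μ)
            / (μ {ω | x < ‖X₀ ω‖}).toReal)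
        atTop (𝓝 (∫ ω, f (Y ω, M₀ ω, M₁ ω) ∂ν)))
    (g : Ed d → ℝ) (hg : Continuous g) (hg0 : ∀ m, 0 ≤ g m) (hg1 : ∀ m, g m ≤ 1)
    {u u' : ℝ} (hu : 1 ≤ u) (huu' : u < u') :
    ∫ ω, g (‖M₁ ω‖⁻¹ • M₁ ω) * hfun u u' (Y ω * ‖M₁ ω‖) ∂ν
      ≤ (∫ ω, g (M₀ ω) ∂ν) * u ^ (-α) := by
  have hu0 : (0:ℝ) < u := lt_of_lt_of_le one_pos hu
  -- the test function
  set f : ℝ × Ed d × Ed d → ℝ :=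
    fun p => g (‖p.2.2‖⁻¹ • p.2.2) * hfun u u' (p.1 * ‖p.2.2‖) with hfdef
  have hfc : Continuous f := cont_test d g hg hu0 huu'
  have hfb : ∃ C : ℝ, ∀ y, |f y| ≤ C := by
    refine ⟨1, fun y => ?_⟩
    rw [abs_mul]
    calc |g (‖y.2.2‖⁻¹ • y.2.2)| * |hfun u u' (y.1 * ‖y.2.2‖)| ≤ 1 * 1 := by
          apply mul_le_mul _ _ (abs_nonneg _) zero_le_one
          · rw [abs_le]; exact ⟨by linarith [hg0 (‖y.2.2‖⁻¹ • y.2.2)], hg1 _⟩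
          · rw [abs_le]; exact ⟨by linarith [hfun_nonneg u u' (y.1 * ‖y.2.2‖)],
              hfun_le_one _ _ _⟩
      _ = 1 := by ring
  have hL := hconv f hfc hfb
  -- the second test function
  set f₂ : ℝ × Ed d × Ed d → ℝ := fun p => g p.2.1 with hf₂def
  have hf₂c : Continuous f₂ := hg.comp (continuous_fst.comp continuous_snd)
  have hf₂b : ∃ C : ℝ, ∀ y, |f₂ y| ≤ C :=
    ⟨1, fun y => by rw [abs_le]; exact ⟨by linarith [hg0 y.2.1], hg1 _⟩⟩
  have hA := hconv f₂ hf₂c hf₂b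
  have hmulat : Tendsto (fun x : ℝ => u * x) atTop atTop :=
    Tendsto.const_mul_atTop hu0 tendsto_id
  have hAu : Tendsto (fun x : ℝ =>
      (∫ ω in {ω | u * x < ‖X₀ ω‖},
          f₂ (‖X₀ ω‖ / (u * x), ‖X₀ ω‖⁻¹ • X₀ ω, ‖X₀ ω‖⁻¹ • X₁ ω) ∂μ)
        / (μ {ω | u * x < ‖X₀ ω‖}).toReal) atTop (𝓝 (∫ ω, f₂ (Y ω, M₀ ω, M₁ ω) ∂ν)) :=
    hA.comp hmulat
  have hB := hreg u hu0
  have hR : Tendsto (fun x : ℝ =>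
      ((∫ ω in {ω | u * x < ‖X₀ ω‖},
          f₂ (‖X₀ ω‖ / (u * x), ‖X₀ ω‖⁻¹ • X₀ ω, ‖X₀ ω‖⁻¹ • X₁ ω) ∂μ)
        / (μ {ω | u * x < ‖X₀ ω‖}).toReal)
      * ((μ {ω | u * x < ‖X₀ ω‖}).toReal / (μ {ω | x < ‖X₀ ω‖}).toReal)) atTop
      (𝓝 ((∫ ω, f₂ (Y ω, M₀ ω, M₁ ω) ∂ν) * u ^ (-α))) := hAu.mul hB
  -- pointwise eventual inequality
  have hineq : ∀ᶠ x : ℝ in atTop,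
      (∫ ω in {ω | x < ‖X₀ ω‖},
          f (‖X₀ ω‖ / x, ‖X₀ ω‖⁻¹ • X₀ ω, ‖X₀ ω‖⁻¹ • X₁ ω) ∂μ)
        / (μ {ω | x < ‖X₀ ω‖}).toReal
      ≤ ((∫ ω in {ω | u * x < ‖X₀ ω‖},
          f₂ (‖X₀ ω‖ / (u * x), ‖X₀ ω‖⁻¹ • X₀ ω, ‖X₀ ω‖⁻¹ • X₁ ω) ∂μ)
        / (μ {ω | u * x < ‖X₀ ω‖}).toReal)
      * ((μ {ω | u * x < ‖X₀ ω‖}).toReal / (μ {ω | x < ‖X₀ ω‖}).toReal) := by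
    filter_upwards [eventually_ge_atTop (1:ℝ)] with x hx
    have hx0 : (0:ℝ) < x := lt_of_lt_of_le one_pos hx
    have hux0 : (0:ℝ) < u * x := by positivity
    have hDpos : 0 < (μ {ω | x < ‖X₀ ω‖}).toReal :=
      ENNReal.toReal_pos (hpos x hx0).ne' (measure_ne_top μ _)
    have hDupos : 0 < (μ {ω | u * x < ‖X₀ ω‖}).toReal :=
      ENNReal.toReal_pos (hpos _ hux0).ne' (measure_ne_top μ _)
    have hsetx : MeasurableSet {ω | x < ‖X₀ ω‖} :=
      measurableSet_lt measurable_const hX₀.norm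
    have hsetux : MeasurableSet {ω | u * x < ‖X₀ ω‖} :=
      measurableSet_lt measurable_const hX₀.norm
    -- Φ : function of the vector only
    set Φ : Ed d → ℝ := fun v => g (‖v‖⁻¹ • v) * hfun u u' (‖v‖ / x) with hΦdef
    have hΦm : Measurable Φ :=
      (hg.measurable.comp (measurable_dir d)).mul
        ((hfun_continuous u u').measurable.comp (measurable_norm.div_const x))
    have hΦ0 : ∀ v, 0 ≤ Φ v := fun v =>
      mul_nonneg (hg0 _) (hfun_nonneg _ _ _)
    have hΦ1 : ∀ v, Φ v ≤ 1 := fun v =>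
      mul_le_one₀ (hg1 _) (hfun_nonneg _ _ _) (hfun_le_one _ _ _)
    have hbd1 : ∀ (W : Ω → ℝ), Measurable W → (∀ ω, |W ω| ≤ 1) → Integrable W μ := by
      intro W hW hb
      refine Integrable.mono' (integrable_const 1) hW.aestronglyMeasurable ?_
      filter_upwards with ω
      simpa [Real.norm_eq_abs] using hb ω
    have hΦX₁int : Integrable (fun ω => Φ (X₁ ω)) μ := by
      apply hbd1 _ (hΦm.comp hX₁)
      intro ω; simp only [Function.comp_apply]; rw [abs_le]
      exact ⟨by linarith [hΦ0 (X₁ ω)], hΦ1 _⟩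
    have hΦX₀int : Integrable (fun ω => Φ (X₀ ω)) μ := by
      apply hbd1 _ (hΦm.comp hX₀)
      intro ω; simp only [Function.comp_apply]; rw [abs_le]
      exact ⟨by linarith [hΦ0 (X₀ ω)], hΦ1 _⟩
    -- step (i): on the conditioning set, the integrand is Φ ∘ X₁
    have step1 : ∫ ω in {ω | x < ‖X₀ ω‖},
        f (‖X₀ ω‖ / x, ‖X₀ ω‖⁻¹ • X₀ ω, ‖X₀ ω‖⁻¹ • X₁ ω) ∂μ
        = ∫ ω in {ω | x < ‖X₀ ω‖}, Φ (X₁ ω) ∂μ := by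
      apply setIntegral_congr_fun hsetx
      intro ω hω
      have ha : (0:ℝ) < ‖X₀ ω‖ := lt_trans hx0 hω
      have ha' : ‖X₀ ω‖ ≠ 0 := ha.ne'
      simp only [hfdef, hΦdef]
      have hnorm : ‖(‖X₀ ω‖⁻¹ • X₁ ω)‖ = ‖X₀ ω‖⁻¹ * ‖X₁ ω‖ := by
        rw [norm_smul, Real.norm_eq_abs, abs_inv, abs_of_pos ha]
      congr 1
      · congr 1
        rw [hnorm, smul_smul]
        congr 1
        rw [mul_inv, inv_inv, mul_comm ‖X₀ ω‖ ‖X₁ ω‖⁻¹, mul_assoc,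
          mul_inv_cancel₀ ha', mul_one]
      · congr 1
        rw [hnorm]
        field_simp
    -- step (ii): extend to the whole space
    have step2 : ∫ ω in {ω | x < ‖X₀ ω‖}, Φ (X₁ ω) ∂μ ≤ ∫ ω, Φ (X₁ ω) ∂μ := by
      apply setIntegral_le_integral hΦX₁int
      filter_upwards with ω using hΦ0 (X₁ ω)
    -- step (iii): stationarity
    have step3 : ∫ ω, Φ (X₁ ω) ∂μ = ∫ ω, Φ (X₀ ω) ∂μ := by
      rw [← integral_map hX₁.aemeasurable hΦm.aestronglyMeasurable, ← hstat,
        integral_map hX₀.aemeasurable hΦm.aestronglyMeasurable]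
    -- step (iv): bound by the indicator of the larger threshold
    have step4 : ∫ ω, Φ (X₀ ω) ∂μ
        ≤ ∫ ω in {ω | u * x < ‖X₀ ω‖}, g (‖X₀ ω‖⁻¹ • X₀ ω) ∂μ := by
      rw [← integral_indicator hsetux]
      apply integral_mono hΦX₀int
      · apply Integrable.indicator _ hsetux
        apply hbd1 _ (hg.measurable.comp ((measurable_dir d).comp hX₀))
        intro ω; simp only [Function.comp_apply]; rw [abs_le]
        exact ⟨by linarith [hg0 (‖X₀ ω‖⁻¹ • X₀ ω)], hg1 _⟩
      · intro ω
        simp only [Set.indicator_apply, Set.mem_setOf_eq]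
        by_cases hω : u * x < ‖X₀ ω‖
        · rw [if_pos hω]
          calc Φ (X₀ ω) ≤ g (‖X₀ ω‖⁻¹ • X₀ ω) * 1 :=
                mul_le_mul_of_nonneg_left (hfun_le_one _ _ _) (hg0 _)
            _ = g (‖X₀ ω‖⁻¹ • X₀ ω) := mul_one _
        · rw [if_neg hω]
          rw [not_lt] at hω
          have hle : ‖X₀ ω‖ / x ≤ u := by
            rw [div_le_iff₀ hx0]
            exact hω
          show Φ (X₀ ω) ≤ 0
          simp only [hΦdef]
          rw [hfun_eq_zero huu' hle, mul_zero]
    have key : ∫ ω in {ω | x < ‖X₀ ω‖},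
        f (‖X₀ ω‖ / x, ‖X₀ ω‖⁻¹ • X₀ ω, ‖X₀ ω‖⁻¹ • X₁ ω) ∂μ
        ≤ ∫ ω in {ω | u * x < ‖X₀ ω‖}, g (‖X₀ ω‖⁻¹ • X₀ ω) ∂μ := by
      rw [step1]; exact le_trans step2 (le_of_eq step3 |>.trans step4)
    have hf₂eq : ∫ ω in {ω | u * x < ‖X₀ ω‖},
        f₂ (‖X₀ ω‖ / (u * x), ‖X₀ ω‖⁻¹ • X₀ ω, ‖X₀ ω‖⁻¹ • X₁ ω) ∂μ
        = ∫ ω in {ω | u * x < ‖X₀ ω‖}, g (‖X₀ ω‖⁻¹ • X₀ ω) ∂μ := rfl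
    rw [hf₂eq, div_mul_div_comm]
    have harith : (∫ ω in {ω | u * x < ‖X₀ ω‖}, g (‖X₀ ω‖⁻¹ • X₀ ω) ∂μ)
          * (μ {ω | u * x < ‖X₀ ω‖}).toReal
          / ((μ {ω | u * x < ‖X₀ ω‖}).toReal * (μ {ω | x < ‖X₀ ω‖}).toReal)
        = (∫ ω in {ω | u * x < ‖X₀ ω‖}, g (‖X₀ ω‖⁻¹ • X₀ ω) ∂μ)
          / (μ {ω | x < ‖X₀ ω‖}).toReal := by
      rw [mul_comm (∫ ω in {ω | u * x < ‖X₀ ω‖}, g (‖X₀ ω‖⁻¹ • X₀ ω) ∂μ) _,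
        mul_div_mul_left _ _ hDupos.ne']
    rw [harith]
    gcongr
  exact le_of_tendsto_of_tendsto hL hR hineq

lemma keyA {d : ℕ} {α : ℝ} (hα : 0 < α)
    {Ω' : Type*} [MeasurableSpace Ω'] (ν : Measure Ω') [IsProbabilityMeasure ν]
    (Y : Ω' → ℝ) (M₀ M₁ : Ω' → Ed d)
    (hY : Measurable Y) (hM₀ : Measurable M₀) (hM₁ : Measurable M₁)
    (hYindep : ProbabilityTheory.IndepFun Y (fun ω => (M₀ ω, M₁ ω)) ν)
    (hYlaw : ∀ y : ℝ, 1 ≤ y → ν {ω | y < Y ω} = ENNReal.ofReal (y ^ (-α)))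
    (g : Ed d → ℝ) (hg : Continuous g) (hg0 : ∀ m, 0 ≤ g m) (hg1 : ∀ m, g m ≤ 1)
    (hlim : ∀ u u' : ℝ, 1 ≤ u → u < u' →
      ∫ ω, g (‖M₁ ω‖⁻¹ • M₁ ω) * hfun u u' (Y ω * ‖M₁ ω‖) ∂ν
        ≤ (∫ ω, g (M₀ ω) ∂ν) * u ^ (-α)) :
    ∫⁻ ω, ENNReal.ofReal (g (‖M₁ ω‖⁻¹ • M₁ ω) * ‖M₁ ω‖ ^ α) ∂ν
      ≤ ENNReal.ofReal (∫ ω, g (M₀ ω) ∂ν) := by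
  have hind1 : ProbabilityTheory.IndepFun Y M₁ ν :=
    hYindep.comp measurable_id measurable_snd
  set I : ℝ := ∫ ω, g (M₀ ω) ∂ν with hIdef
  have hI0 : 0 ≤ I := integral_nonneg (fun ω => hg0 _)
  set G : Ed d → ℝ := fun m => g (‖m‖⁻¹ • m) with hGdef
  have hGm : Measurable G := hg.measurable.comp (measurable_dir d)
  have hG0 : ∀ m, 0 ≤ G m := fun m => hg0 _
  have hG1 : ∀ m, G m ≤ 1 := fun m => hg1 _
  -- step for each n
  have hn : ∀ n : ℕ,
      ∫⁻ ω, ENNReal.ofReal (G (M₁ ω) * min (((n:ℝ) + 2) ^ α) (‖M₁ ω‖ ^ α)) ∂ν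
        ≤ ENNReal.ofReal ((((n:ℝ) + 2) ^ α * ((n:ℝ) + 1) ^ (-α)) * I) := by
    intro n
    set u : ℝ := (n:ℝ) + 1 with hudef
    set u' : ℝ := (n:ℝ) + 2 with hu'def
    have hu1 : (1:ℝ) ≤ u := by simp [hudef]
    have huu' : u < u' := by simp [hudef, hu'def]
    have hu'1 : (1:ℝ) ≤ u' := by linarith
    have hu'0 : (0:ℝ) < u' := by linarith
    set W : Ω' → ℝ := fun ω => G (M₁ ω) * hfun u u' (Y ω * ‖M₁ ω‖) with hWdef
    have hWm : Measurable W :=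
      (hGm.comp hM₁).mul ((hfun_continuous u u').measurable.comp
        (hY.mul (measurable_norm.comp hM₁)))
    have hW0 : ∀ ω, 0 ≤ W ω := fun ω => mul_nonneg (hG0 _) (hfun_nonneg _ _ _)
    have hWint : Integrable W ν := by
      refine Integrable.mono' (integrable_const 1) hWm.aestronglyMeasurable ?_
      filter_upwards with ω
      rw [Real.norm_eq_abs, abs_of_nonneg (hW0 ω)]
      exact mul_le_one₀ (hG1 _) (hfun_nonneg _ _ _) (hfun_le_one _ _ _)
    -- real bound from hlim
    have hreal : ∫ ω, W ω ∂ν ≤ I * u ^ (-α) := hlim u u' hu1 huu'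
    -- lintegral version
    have hofW : ENNReal.ofReal (∫ ω, W ω ∂ν) = ∫⁻ ω, ENNReal.ofReal (W ω) ∂ν :=
      ofReal_integral_eq_lintegral_ofReal hWint (by filter_upwards with ω using hW0 ω)
    -- lower bound with the indicator
    have hlow : ∫⁻ ω, ENNReal.ofReal (G (M₁ ω)) *
        Set.indicator {p : ℝ × Ed d | u' < p.1 * ‖p.2‖} 1 (Y ω, M₁ ω) ∂ν
        ≤ ∫⁻ ω, ENNReal.ofReal (W ω) ∂ν := by
      apply lintegral_mono
      intro ω
      simp only [Set.indicator_apply, Set.mem_setOf_eq, Pi.one_apply]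
      by_cases hω : u' < Y ω * ‖M₁ ω‖
      · rw [if_pos hω, mul_one, hWdef]
        have : hfun u u' (Y ω * ‖M₁ ω‖) = 1 := hfun_eq_one huu' hω.le
        simp only [this, mul_one]
        exact le_refl _
      · rw [if_neg hω, mul_zero]
        exact zero_le
    -- independence computation
    have hcalc := indep_calc ν Y M₁ hY hM₁ hind1 hα hYlaw G hGm hu'1
    -- identify the measure-theoretic integrand after multiplying by u'^α
    have hmul : ∀ ω, ENNReal.ofReal (u' ^ α) * (ENNReal.ofReal (G (M₁ ω)) *
        (if M₁ ω = 0 then 0 else ENNReal.ofReal (min 1 ((u' / ‖M₁ ω‖) ^ (-α)))))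
        = ENNReal.ofReal (G (M₁ ω) * min (u' ^ α) (‖M₁ ω‖ ^ α)) := by
      intro ω
      by_cases hm : M₁ ω = 0
      · simp [hm, Real.zero_rpow hα.ne', min_eq_right (Real.rpow_nonneg (by linarith : (0:ℝ) ≤ u') α)]
      · rw [if_neg hm]
        have hnm : (0:ℝ) < ‖M₁ ω‖ := norm_pos_iff.2 hm
        have hreal_id : u' ^ α * min 1 ((u' / ‖M₁ ω‖) ^ (-α))
            = min (u' ^ α) (‖M₁ ω‖ ^ α) := by
          have h1 : (u' / ‖M₁ ω‖) ^ (-α) = ‖M₁ ω‖ ^ α / u' ^ α := by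
            rw [Real.rpow_neg (by positivity), Real.div_rpow hu'0.le hnm.le, inv_div]
          rw [h1, mul_min_of_nonneg _ _ (Real.rpow_nonneg hu'0.le α), mul_one,
            mul_comm (u' ^ α) (‖M₁ ω‖ ^ α / u' ^ α),
            div_mul_cancel₀ _ (ne_of_gt (Real.rpow_pos_of_pos hu'0 α))]
        rw [← ENNReal.ofReal_mul (hG0 _), ← ENNReal.ofReal_mul (Real.rpow_nonneg hu'0.le α)]
        congr 1
        rw [← mul_assoc, mul_comm (u' ^ α) (G (M₁ ω)), mul_assoc, hreal_id]
    -- measurability of the rhs integrand of hcalc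
    have hrhsm : Measurable (fun ω => ENNReal.ofReal (G (M₁ ω)) *
        (if M₁ ω = 0 then 0 else ENNReal.ofReal (min 1 ((u' / ‖M₁ ω‖) ^ (-α))))) := by
      apply Measurable.mul
      · exact ENNReal.measurable_ofReal.comp (hGm.comp hM₁)
      · apply Measurable.ite (hM₁ (measurableSet_singleton 0)) measurable_const
        exact ENNReal.measurable_ofReal.comp
          (measurable_const.min (measurable_rpow_comp
            (measurable_const.div (measurable_norm.comp hM₁))
            (fun ω => div_nonneg hu'0.le (norm_nonneg _))
            (neg_ne_zero.2 hα.ne')))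
    calc ∫⁻ ω, ENNReal.ofReal (G (M₁ ω) * min (u' ^ α) (‖M₁ ω‖ ^ α)) ∂ν
        = ∫⁻ ω, ENNReal.ofReal (u' ^ α) * (ENNReal.ofReal (G (M₁ ω)) *
            (if M₁ ω = 0 then 0 else ENNReal.ofReal (min 1 ((u' / ‖M₁ ω‖) ^ (-α))))) ∂ν := by
          exact lintegral_congr fun ω => (hmul ω).symm
      _ = ENNReal.ofReal (u' ^ α) * ∫⁻ ω, ENNReal.ofReal (G (M₁ ω)) *
            (if M₁ ω = 0 then 0 else ENNReal.ofReal (min 1 ((u' / ‖M₁ ω‖) ^ (-α)))) ∂ν :=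
          lintegral_const_mul _ hrhsm
      _ = ENNReal.ofReal (u' ^ α) * ∫⁻ ω, ENNReal.ofReal (G (M₁ ω)) *
            Set.indicator {p : ℝ × Ed d | u' < p.1 * ‖p.2‖} 1 (Y ω, M₁ ω) ∂ν := by
          rw [hcalc]
      _ ≤ ENNReal.ofReal (u' ^ α) * ∫⁻ ω, ENNReal.ofReal (W ω) ∂ν :=
          mul_le_mul_right hlow _
      _ = ENNReal.ofReal (u' ^ α) * ENNReal.ofReal (∫ ω, W ω ∂ν) := by rw [hofW]
      _ ≤ ENNReal.ofReal (u' ^ α) * ENNReal.ofReal (I * u ^ (-α)) :=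
          mul_le_mul_right (ENNReal.ofReal_le_ofReal hreal) _
      _ = ENNReal.ofReal ((u' ^ α * u ^ (-α)) * I) := by
          rw [← ENNReal.ofReal_mul (Real.rpow_nonneg hu'0.le α)]
          congr 1
          ring
  -- monotone convergence
  set fn : ℕ → Ω' → ℝ≥0∞ := fun n ω =>
    ENNReal.ofReal (G (M₁ ω) * min (((n:ℝ) + 2) ^ α) (‖M₁ ω‖ ^ α)) with hfndef
  have hnormm : Measurable (fun ω => ‖M₁ ω‖ ^ α) :=
    measurable_rpow_comp (measurable_norm.comp hM₁) (fun ω => norm_nonneg _) hα.ne'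
  have hfnm : ∀ n, Measurable (fn n) := fun n =>
    ENNReal.measurable_ofReal.comp ((hGm.comp hM₁).mul (measurable_const.min hnormm))
  have hfnmono : Monotone fn := by
    intro n m hnm ω
    apply ENNReal.ofReal_le_ofReal
    apply mul_le_mul_of_nonneg_left _ (hG0 _)
    apply min_le_min _ (le_refl _)
    have hcast : (n:ℝ) ≤ (m:ℝ) := Nat.cast_le.2 hnm
    exact Real.rpow_le_rpow (by positivity) (by linarith) hα.le
  have hsup : ∀ ω, ⨆ n, fn n ω
      = ENNReal.ofReal (G (M₁ ω) * ‖M₁ ω‖ ^ α) := by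
    intro ω
    apply le_antisymm
    · apply iSup_le
      intro n
      exact ENNReal.ofReal_le_ofReal
        (mul_le_mul_of_nonneg_left (min_le_right _ _) (hG0 _))
    · obtain ⟨n, hnn⟩ := exists_nat_ge (‖M₁ ω‖)
      refine le_iSup_of_le n (le_of_eq ?_)
      congr 1
      rw [min_eq_right (Real.rpow_le_rpow (norm_nonneg _) (by linarith) hα.le)]
  have hMCT : Tendsto (fun n => ∫⁻ ω, fn n ω ∂ν) atTop
      (𝓝 (∫⁻ ω, ENNReal.ofReal (G (M₁ ω) * ‖M₁ ω‖ ^ α) ∂ν)) := by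
    have h1 : ∫⁻ ω, ENNReal.ofReal (G (M₁ ω) * ‖M₁ ω‖ ^ α) ∂ν
        = ⨆ n, ∫⁻ ω, fn n ω ∂ν := by
      rw [← lintegral_iSup hfnm hfnmono]
      exact lintegral_congr fun ω => (hsup ω).symm
    rw [h1]
    exact tendsto_atTop_iSup (fun n m hnm => lintegral_mono (hfnmono hnm))
  have hRHS : Tendsto (fun n : ℕ =>
      ENNReal.ofReal ((((n:ℝ) + 2) ^ α * ((n:ℝ) + 1) ^ (-α)) * I)) atTop
      (𝓝 (ENNReal.ofReal I)) := by
    have hcn : ∀ n : ℕ, (((n:ℝ) + 2) ^ α * ((n:ℝ) + 1) ^ (-α))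
        = ((((n:ℝ) + 2) / ((n:ℝ) + 1)) ^ α) := by
      intro n
      rw [Real.div_rpow (by positivity) (by positivity), Real.rpow_neg (by positivity),
        div_eq_mul_inv]
    have hbase : Tendsto (fun n : ℕ => (((n:ℝ) + 2) / ((n:ℝ) + 1))) atTop (𝓝 1) := by
      have heq : ∀ n : ℕ, (((n:ℝ) + 2) / ((n:ℝ) + 1)) = 1 + 1 / ((n:ℝ) + 1) := by
        intro n
        have : ((n:ℝ) + 1) ≠ 0 := by positivity
        field_simp
        ring
      simp only [heq]
      have h2 : Tendsto (fun n : ℕ => 1 / ((n:ℝ) + 1)) atTop (𝓝 0) :=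
        tendsto_one_div_add_atTop_nhds_zero_nat
      have h3 : Tendsto (fun _ : ℕ => (1:ℝ)) atTop (𝓝 1) := tendsto_const_nhds
      simpa using h3.add h2
    have hpow : Tendsto (fun n : ℕ => ((((n:ℝ) + 2) / ((n:ℝ) + 1)) ^ α)) atTop (𝓝 1) := by
      have hc : ContinuousAt (fun x : ℝ => x ^ α) 1 :=
        Real.continuousAt_rpow_const 1 α (Or.inl one_ne_zero)
      have := hc.tendsto.comp hbase
      simpa [Real.one_rpow, Function.comp_def] using this
    have hmul2 : Tendsto (fun n : ℕ => ((((n:ℝ) + 2) / ((n:ℝ) + 1)) ^ α) * I) atTop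
        (𝓝 I) := by simpa using hpow.mul_const I
    have := (ENNReal.continuous_ofReal.continuousAt (x := I)).tendsto.comp hmul2
    simp only [Function.comp_def] at this
    simp only [hcn]
    exact this
  have final := le_of_tendsto_of_tendsto hMCT hRHS (Eventually.of_forall hn)
  exact le_trans (le_of_eq (lintegral_congr fun ω => rfl)) final

lemma stepB {d : ℕ} {α : ℝ} (hα : 0 < α)
    {Ω' : Type*} [MeasurableSpace Ω'] (ν : Measure Ω') [IsProbabilityMeasure ν]
    (M₀ M₁ : Ω' → Ed d) (hM₀ : Measurable M₀) (hM₁ : Measurable M₁)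
    (hkey : ∀ g : Ed d → ℝ, Continuous g → (∀ m, 0 ≤ g m) → (∀ m, g m ≤ 1) →
      ∫⁻ ω, ENNReal.ofReal (g (‖M₁ ω‖⁻¹ • M₁ ω) * ‖M₁ ω‖ ^ α) ∂ν
        ≤ ENNReal.ofReal (∫ ω, g (M₀ ω) ∂ν)) :
    ∀ S : Set (Ed d), MeasurableSet S →
      (∫⁻ ω, Set.indicator {ω | M₁ ω ≠ 0 ∧ ‖M₁ ω‖⁻¹ • M₁ ω ∈ S}
          (fun ω => ENNReal.ofReal (‖M₁ ω‖ ^ α)) ω ∂ν)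
        ≤ ν {ω | M₀ ω ∈ S} := by
  classical
  set w : Ω' → ℝ≥0∞ := fun ω => ENNReal.ofReal (‖M₁ ω‖ ^ α) with hwdef
  have hwm : Measurable w :=
    ENNReal.measurable_ofReal.comp
      (measurable_rpow_comp (measurable_norm.comp hM₁) (fun ω => norm_nonneg _) hα.ne')
  set T : Ω' → Ed d := fun ω => ‖M₁ ω‖⁻¹ • M₁ ω with hTdef
  have hTm : Measurable T := (measurable_dir d).comp hM₁
  set A : Measure (Ed d) := (ν.withDensity w).map T with hAdef
  set B : Measure (Ed d) := ν.map M₀ with hBdef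
  haveI : IsProbabilityMeasure B := Measure.isProbabilityMeasure_map hM₀.aemeasurable
  -- A S equals the lintegral in question
  have eqA : ∀ S : Set (Ed d), MeasurableSet S →
      A S = ∫⁻ ω, Set.indicator {ω | M₁ ω ≠ 0 ∧ ‖M₁ ω‖⁻¹ • M₁ ω ∈ S}
          (fun ω => ENNReal.ofReal (‖M₁ ω‖ ^ α)) ω ∂ν := by
    intro S hS
    rw [hAdef, Measure.map_apply hTm hS, withDensity_apply _ (hTm hS),
      ← lintegral_indicator (hTm hS)]
    apply lintegral_congr
    intro ω
    by_cases hm : M₁ ω = 0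
    · have hw0 : w ω = 0 := by
        simp [hwdef, hm, Real.zero_rpow hα.ne']
      have h2 : ω ∉ {ω | M₁ ω ≠ 0 ∧ ‖M₁ ω‖⁻¹ • M₁ ω ∈ S} := fun h => h.1 hm
      rw [Set.indicator_of_notMem h2]
      by_cases h3 : ω ∈ T ⁻¹' S
      · rw [Set.indicator_of_mem h3, hw0]
      · rw [Set.indicator_of_notMem h3]
    · have hiff : ω ∈ T ⁻¹' S ↔ ω ∈ {ω | M₁ ω ≠ 0 ∧ ‖M₁ ω‖⁻¹ • M₁ ω ∈ S} := by
        simp only [Set.mem_preimage, Set.mem_setOf_eq, hTdef]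
        exact ⟨fun h => ⟨hm, h⟩, fun h => h.2⟩
      by_cases h3 : ω ∈ T ⁻¹' S
      · rw [Set.indicator_of_mem h3, Set.indicator_of_mem (hiff.1 h3)]
      · rw [Set.indicator_of_notMem h3, Set.indicator_of_notMem (fun h => h3 (hiff.2 h))]
  -- key inequality for continuous functions in lintegral form
  have hkey2 : ∀ g : Ed d → ℝ, Continuous g → (∀ m, 0 ≤ g m) → (∀ m, g m ≤ 1) →
      ∫⁻ x, ENNReal.ofReal (g x) ∂A ≤ ∫⁻ x, ENNReal.ofReal (g x) ∂B := by
    intro g hg hg0 hg1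
    have hgB : ∫⁻ x, ENNReal.ofReal (g x) ∂B = ∫⁻ ω, ENNReal.ofReal (g (M₀ ω)) ∂ν := by
      rw [hBdef]
      exact lintegral_map hg.measurable.ennreal_ofReal hM₀
    have hgA : ∫⁻ x, ENNReal.ofReal (g x) ∂A
        = ∫⁻ ω, ENNReal.ofReal (g (T ω) * ‖M₁ ω‖ ^ α) ∂ν := by
      rw [hAdef, lintegral_map hg.measurable.ennreal_ofReal hTm,
        lintegral_withDensity_eq_lintegral_mul ν hwm
          (show Measurable fun a => ENNReal.ofReal (g (T a)) from
            hg.measurable.ennreal_ofReal.comp hTm)]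
      apply lintegral_congr
      intro ω
      simp only [Pi.mul_apply, hwdef]
      rw [mul_comm, ← ENNReal.ofReal_mul (hg0 _)]
    have hintB : ENNReal.ofReal (∫ ω, g (M₀ ω) ∂ν) = ∫⁻ ω, ENNReal.ofReal (g (M₀ ω)) ∂ν := by
      apply ofReal_integral_eq_lintegral_ofReal
      · refine Integrable.mono' (integrable_const 1)
          (hg.measurable.comp hM₀).aestronglyMeasurable ?_
        filter_upwards with ω
        rw [Real.norm_eq_abs, abs_of_nonneg (hg0 _)]
        exact hg1 _
      · filter_upwards with ω using hg0 _
    rw [hgA, hgB, ← hintB]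
    exact hkey g hg hg0 hg1
  -- A is a finite measure
  have hAfin : A Set.univ ≤ 1 := by
    rw [eqA Set.univ MeasurableSet.univ]
    have h1 := hkey (fun _ => 1) continuous_const (fun _ => zero_le_one) (fun _ => le_refl _)
    simp only [one_mul] at h1
    calc ∫⁻ ω, Set.indicator {ω | M₁ ω ≠ 0 ∧ ‖M₁ ω‖⁻¹ • M₁ ω ∈ Set.univ}
          (fun ω => ENNReal.ofReal (‖M₁ ω‖ ^ α)) ω ∂ν
        ≤ ∫⁻ ω, ENNReal.ofReal (‖M₁ ω‖ ^ α) ∂ν :=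
          lintegral_mono (fun ω => Set.indicator_le_self _ _ ω)
      _ ≤ ENNReal.ofReal (∫ ω, (1:ℝ) ∂ν) := h1
      _ ≤ 1 := by simp
  haveI : IsFiniteMeasure A :=
    ⟨lt_of_le_of_lt hAfin ENNReal.one_lt_top⟩
  -- comparison for closed sets
  have hclosed : ∀ F : Set (Ed d), IsClosed F → A F ≤ B F := by
    intro F hF
    -- approximate from outside by open sets for B
    refine ENNReal.le_of_forall_pos_le_add (fun ε hε hBF => ?_)
    obtain ⟨U, hFU, hUopen, hBU⟩ := Set.exists_isOpen_lt_of_lt F (B F + ε)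
      (ENNReal.lt_add_right hBF.ne (ENNReal.coe_ne_zero.2 hε.ne'))
    -- Urysohn
    obtain ⟨g, hg0U, hg1F, hg01⟩ := exists_continuous_zero_one_of_isClosed
      hUopen.isClosed_compl hF (by
        rw [Set.disjoint_compl_left_iff_subset]
        exact hFU)
    have hgc : Continuous (g : Ed d → ℝ) := g.continuous
    have hg0' : ∀ m, 0 ≤ (g : Ed d → ℝ) m := fun m => (hg01 m).1
    have hg1' : ∀ m, (g : Ed d → ℝ) m ≤ 1 := fun m => (hg01 m).2
    have step1 : A F ≤ ∫⁻ x, ENNReal.ofReal (g x) ∂A := by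
      have hpt : ∀ x, Set.indicator F (1 : Ed d → ℝ≥0∞) x ≤ ENNReal.ofReal (g x) := by
        intro x
        by_cases hx : x ∈ F
        · rw [Set.indicator_of_mem hx]
          have : g x = 1 := hg1F hx
          simp [this, Pi.one_apply]
        · rw [Set.indicator_of_notMem hx]
          exact zero_le
      calc A F = ∫⁻ x, Set.indicator F (1 : Ed d → ℝ≥0∞) x ∂A :=
            (lintegral_indicator_one hF.measurableSet).symm
        _ ≤ ∫⁻ x, ENNReal.ofReal (g x) ∂A := lintegral_mono hpt
    have step2 : ∫⁻ x, ENNReal.ofReal (g x) ∂B ≤ B U := by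
      have hpt : ∀ x, ENNReal.ofReal (g x) ≤ Set.indicator U (1 : Ed d → ℝ≥0∞) x := by
        intro x
        by_cases hx : x ∈ U
        · rw [Set.indicator_of_mem hx]
          simp only [Pi.one_apply]
          exact ENNReal.ofReal_le_of_le_toReal (by simp [hg1' x])
        · rw [Set.indicator_of_notMem hx]
          have : g x = 0 := hg0U (by simpa using hx)
          simp [this]
      calc ∫⁻ x, ENNReal.ofReal (g x) ∂B
          ≤ ∫⁻ x, Set.indicator U (1 : Ed d → ℝ≥0∞) x ∂B := lintegral_mono hpt
        _ = B U := lintegral_indicator_one hUopen.measurableSet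
    calc A F ≤ ∫⁻ x, ENNReal.ofReal (g x) ∂A := step1
      _ ≤ ∫⁻ x, ENNReal.ofReal (g x) ∂B := hkey2 g hgc hg0' hg1'
      _ ≤ B U := step2
      _ ≤ B F + ε := hBU.le
  -- comparison for measurable sets via inner regularity of A
  have hAB : ∀ S : Set (Ed d), MeasurableSet S → A S ≤ B S := by
    intro S hS
    refine ENNReal.le_of_forall_pos_le_add (fun ε hε hBS => ?_)
    obtain ⟨F, hFS, hFc, hAF⟩ := hS.exists_isClosed_lt_add (measure_ne_top A S)
      (ENNReal.coe_ne_zero.2 hε.ne')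
    calc A S ≤ A F + ε := hAF.le
      _ ≤ B F + ε := add_le_add_left (hclosed F hFc) _
      _ ≤ B S + ε := add_le_add_left (measure_mono hFS) _
  intro S hS
  rw [← eqA S hS]
  have : ν {ω | M₀ ω ∈ S} = B S := by
    rw [hBdef, Measure.map_apply hM₀ hS]
    rfl
  rw [this]
  exact hAB S hS

/-- Lemma 4.3 (first part): the law of the spectral pair `(M 0, M 1)` of a stationary
regularly varying pair `(X 0, X 1)` is admissible, i.e. belongs to `M_α`:
`E[1_{M₁ ≠ 0} 1_S(M₁/‖M₁‖) ‖M₁‖^α] ≤ Pr(M₀ ∈ S)` for every Borel `S ⊆ S^{d-1}`. -/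
theorem tail_pair_admissible
    {d : ℕ} {α : ℝ} (hα : 0 < α)
    {Ω : Type*} [MeasurableSpace Ω] (μ : Measure Ω) [IsProbabilityMeasure μ]
    (X₀ X₁ : Ω → Ed d) (hX₀ : Measurable X₀) (hX₁ : Measurable X₁)
    (hstat : μ.map X₀ = μ.map X₁)
    (hpos : ∀ x : ℝ, 0 < x → 0 < μ {ω | x < ‖X₀ ω‖})
    (hreg : ∀ u : ℝ, 0 < u →
      Tendsto (fun x : ℝ =>
          (μ {ω | u * x < ‖X₀ ω‖}).toReal / (μ {ω | x < ‖X₀ ω‖}).toReal)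
        atTop (𝓝 (u ^ (-α))))
    {Ω' : Type*} [MeasurableSpace Ω'] (ν : Measure Ω') [IsProbabilityMeasure ν]
    (Y : Ω' → ℝ) (M₀ M₁ : Ω' → Ed d)
    (hY : Measurable Y) (hM₀ : Measurable M₀) (hM₁ : Measurable M₁)
    (hM₀sphere : ∀ ω, ‖M₀ ω‖ = 1)
    (hYindep : ProbabilityTheory.IndepFun Y (fun ω => (M₀ ω, M₁ ω)) ν)
    (hYlaw : ∀ y : ℝ, 1 ≤ y → ν {ω | y < Y ω} = ENNReal.ofReal (y ^ (-α)))
    (hconv : ∀ f : ℝ × Ed d × Ed d → ℝ, Continuous f → (∃ C : ℝ, ∀ y, |f y| ≤ C) →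
      Tendsto (fun x : ℝ =>
          (∫ ω in {ω | x < ‖X₀ ω‖},
              f (‖X₀ ω‖ / x, ‖X₀ ω‖⁻¹ • X₀ ω, ‖X₀ ω‖⁻¹ • X₁ ω) ∂μ)
            / (μ {ω | x < ‖X₀ ω‖}).toReal)
        atTop (𝓝 (∫ ω, f (Y ω, M₀ ω, M₁ ω) ∂ν))) :
    (∀ S : Set (Ed d), MeasurableSet S → S ⊆ unitSphere d →
      (∫⁻ ω, Set.indicator {ω | M₁ ω ≠ 0 ∧ ‖M₁ ω‖⁻¹ • M₁ ω ∈ S}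
          (fun ω => ENNReal.ofReal (‖M₁ ω‖ ^ α)) ω ∂ν)
        ≤ ν {ω | M₀ ω ∈ S}) ∧
    MemMalpha d α (ν.map fun ω => (M₀ ω, M₁ ω)) := by
  -- Step A: the key inequality for continuous test functions on the sphere
  have hkey : ∀ g : Ed d → ℝ, Continuous g → (∀ m, 0 ≤ g m) → (∀ m, g m ≤ 1) →
      ∫⁻ ω, ENNReal.ofReal (g (‖M₁ ω‖⁻¹ • M₁ ω) * ‖M₁ ω‖ ^ α) ∂ν
        ≤ ENNReal.ofReal (∫ ω, g (M₀ ω) ∂ν) := by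
    intro g hg hg0 hg1
    exact keyA hα ν Y M₀ M₁ hY hM₀ hM₁ hYindep hYlaw g hg hg0 hg1
      (fun u u' hu huu' =>
        limit_bound hα μ X₀ X₁ hX₀ hX₁ hstat hpos hreg ν Y M₀ M₁ hconv g hg hg0 hg1 hu huu')
  -- Step B: pass to Borel sets by regularity
  have hfirst := stepB hα ν M₀ M₁ hM₀ hM₁ hkey
  refine ⟨fun S hS _ => hfirst S hS, ?_⟩
  haveI hPprob : IsProbabilityMeasure (ν.map fun ω => (M₀ ω, M₁ ω)) :=
    Measure.isProbabilityMeasure_map (hM₀.prodMk hM₁).aemeasurable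
  refine ⟨hPprob, ?_, ?_⟩
  · -- the first marginal lives on the sphere
    have hset : MeasurableSet {p : Ed d × Ed d | ‖p.1‖ = 1} := by
      have : {p : Ed d × Ed d | ‖p.1‖ = 1} = (fun p : Ed d × Ed d => ‖p.1‖) ⁻¹' {1} := by
        ext p; simp
      rw [this]
      exact (measurable_fst.norm) (measurableSet_singleton 1)
    rw [Measure.map_apply (hM₀.prodMk hM₁) hset]
    have : (fun ω => (M₀ ω, M₁ ω)) ⁻¹' {p : Ed d × Ed d | ‖p.1‖ = 1} = Set.univ := by
      ext ω; simp [hM₀sphere ω]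
    rw [this]
    exact measure_univ
  · -- admissibility
    intro S hS hSsub
    have hdirset : MeasurableSet {p : Ed d × Ed d | p.2 ≠ 0 ∧ ‖p.2‖⁻¹ • p.2 ∈ S} := by
      have h1 : MeasurableSet {p : Ed d × Ed d | p.2 ≠ 0} :=
        (measurable_snd (measurableSet_singleton (0 : Ed d))).compl
      have h2 : MeasurableSet {p : Ed d × Ed d | ‖p.2‖⁻¹ • p.2 ∈ S} :=
        ((measurable_dir d).comp measurable_snd) hS
      have : {p : Ed d × Ed d | p.2 ≠ 0 ∧ ‖p.2‖⁻¹ • p.2 ∈ S}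
          = {p : Ed d × Ed d | p.2 ≠ 0} ∩ {p : Ed d × Ed d | ‖p.2‖⁻¹ • p.2 ∈ S} := rfl
      rw [this]
      exact h1.inter h2
    have hintm : Measurable (fun p : Ed d × Ed d =>
        Set.indicator {p : Ed d × Ed d | p.2 ≠ 0 ∧ ‖p.2‖⁻¹ • p.2 ∈ S}
          (fun p => ENNReal.ofReal (‖p.2‖ ^ α)) p) := by
      apply Measurable.indicator _ hdirset
      exact (measurable_rpow_comp (measurable_norm.comp measurable_snd)
        (fun p => norm_nonneg _) hα.ne').ennreal_ofReal
    have hmass : dirMass d α (ν.map fun ω => (M₀ ω, M₁ ω)) S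
        = ∫⁻ ω, Set.indicator {ω | M₁ ω ≠ 0 ∧ ‖M₁ ω‖⁻¹ • M₁ ω ∈ S}
            (fun ω => ENNReal.ofReal (‖M₁ ω‖ ^ α)) ω ∂ν := by
      rw [dirMass, lintegral_map hintm (hM₀.prodMk hM₁)]
      apply lintegral_congr
      intro ω
      simp only [Set.indicator_apply, Set.mem_setOf_eq]
    have hprod : (ν.map fun ω => (M₀ ω, M₁ ω)) (S ×ˢ (Set.univ : Set (Ed d)))
        = ν {ω | M₀ ω ∈ S} := by
      rw [Measure.map_apply (hM₀.prodMk hM₁) (hS.prod MeasurableSet.univ)]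
      congr 1
      ext ω
      simp [Set.mem_prod]
    rw [hmass, hprod]
    exact hfirst S hS
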